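/- Let Y be a rich solid QBF-space on X whose quasi-norm is a p-norm for some 0 < p ≤ 1, i.e. ‖F+G|Y‖^p ≤ ‖F|Y‖^p + ‖G|Y‖^p for all F,G ∈ Y, and let U = {U_i}_{i∈I} be an admissible covering of X. Set ω♭(i) = ‖χ_{U_i}|Y‖ and ω♮(i) = μ(U_i)^{-1}‖χ_{U_i}|Y‖. Then there is a constant c ≥ 1 (independent of the sequence) such that: (a) every sequence λ = (λ_i)_{i∈I} with Σ_{i∈I} |λ_i|^p ω♭(i)^p < ∞ belongs to Y♭(U) with ‖λ|Y♭‖^p ≤ c Σ_{i∈I} |λ_i|^p ω♭(i)^p; (b) for every λ ∈ Y♭(U) and every j ∈ I, |λ_j| ω♭(j) ≤ ‖λ|Y♭‖. The analogous statements hold for Y♮(U) with ω♮ in place of ω♭. -/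

import Mathlib

open MeasureTheory Filter Topology
open scoped ENNReal NNReal

noncomputable section

/-- Model of a rich solid quasi-Banach function space `Y` on `(X, μ)`: `Y` is described by a
solid quasi-norm functional `N` on nonnegative extended-real valued functions (a measurable
`F : X → ℂ` belongs to `Y` iff `N (fun x => ‖F x‖₊) ≠ ∞`). -/
structure QBF (X : Type*) [MeasurableSpace X] (μ : MeasureTheory.Measure X) where
  /-- the quasi-norm functional -/
  N : (X → ℝ≥0∞) → ℝ≥0∞
  /-- the quasi-norm constant `C_Y` -/
  C : ℝ≥0∞
  one_le_C : 1 ≤ C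
  C_ne_top : C ≠ ⊤
  /-- solidity -/
  mono : ∀ f g : X → ℝ≥0∞, Measurable f → Measurable g →
    (∀ᵐ x ∂μ, f x ≤ g x) → N f ≤ N g
  /-- quasi-triangle inequality with constant `C_Y` -/
  add_le : ∀ f g : X → ℝ≥0∞, Measurable f → Measurable g →
    N (fun x => f x + g x) ≤ C * (N f + N g)
  /-- homogeneity -/
  smul_eq : ∀ (c : ℝ≥0∞) (f : X → ℝ≥0∞), Measurable f → N (fun x => c * f x) = c * N f
  /-- definiteness (up to a.e. equality) -/
  eq_zero : ∀ f : X → ℝ≥0∞, Measurable f → N f = 0 → f =ᵐ[μ] 0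
  /-- completeness of `Y` -/
  complete : ∀ F : ℕ → X → ℂ, (∀ n, Measurable (F n)) →
    (∀ n, N (fun x => (‖F n x‖₊ : ℝ≥0∞)) ≠ ⊤) →
    Filter.Tendsto (fun q : ℕ × ℕ => N (fun x => (‖F q.1 x - F q.2 x‖₊ : ℝ≥0∞)))
      Filter.atTop (nhds 0) →
    ∃ G : X → ℂ, Measurable G ∧ N (fun x => (‖G x‖₊ : ℝ≥0∞)) ≠ ⊤ ∧
      Filter.Tendsto (fun n => N (fun x => (‖F n x - G x‖₊ : ℝ≥0∞)))
        Filter.atTop (nhds 0)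

/-- An admissible covering of `X`: a locally finite covering by measurable, relatively
compact sets with nonempty interior and finite intersection number `σ`. -/
structure AdmissibleCovering {X : Type*} [TopologicalSpace X] [MeasurableSpace X]
    {I : Type*} (U : I → Set X) (σ : ℕ) : Prop where
  meas : ∀ i, MeasurableSet (U i)
  rel_compact : ∀ i, IsCompact (closure (U i))
  interior_nonempty : ∀ i, (interior (U i)).Nonempty
  covers : (⋃ i, U i) = Set.univ
  locFin : LocallyFinite U
  inter_finite : ∀ i, {j | (U i ∩ U j).Nonempty}.Finite
  inter_card_le : ∀ i, {j | (U i ∩ U j).Nonempty}.ncard ≤ σ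

variable {X : Type*} [TopologicalSpace X] [MeasurableSpace X] {μ : MeasureTheory.Measure X}

lemma QBF.N_zero (Q : QBF X μ) : Q.N (fun _ => 0) = 0 := by
  have h := Q.smul_eq 0 (fun _ => (0:ℝ≥0∞)) measurable_const
  simpa using h

lemma QBF.N_finset_sum_rpow (Q : QBF X μ) {p : ℝ} (hp0 : 0 < p)
    (hpnorm : ∀ f g : X → ℝ≥0∞, Measurable f → Measurable g →
      Q.N (fun x => f x + g x) ^ p ≤ Q.N f ^ p + Q.N g ^ p)
    {ι : Type*} (s : Finset ι) (f : ι → X → ℝ≥0∞)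
    (hf : ∀ i, Measurable (f i)) :
    Q.N (fun x => ∑ i ∈ s, f i x) ^ p ≤ ∑ i ∈ s, Q.N (f i) ^ p := by
  classical
  induction s using Finset.induction_on with
  | empty => simp [Q.N_zero, ENNReal.zero_rpow_of_pos hp0]
  | @insert a s ha ih =>
    have hmeas : Measurable (fun x => ∑ i ∈ s, f i x) :=
      Finset.measurable_sum s (fun i _ => hf i)
    have h1 : (fun x => ∑ i ∈ insert a s, f i x)
        = fun x => f a x + ∑ i ∈ s, f i x := by
      funext x; rw [Finset.sum_insert ha]
    rw [h1, Finset.sum_insert ha]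
    exact le_trans (hpnorm _ _ (hf a) hmeas) (add_le_add_right ih _)

lemma countable_ne_zero_of_tsum_ne_top {ι : Type*} {f : ι → ℝ≥0∞} (h : ∑' i, f i ≠ ⊤) :
    {i | f i ≠ 0}.Countable := by
  have hsub : {i | f i ≠ 0} ⊆ ⋃ n : ℕ, {i | ((n : ℝ≥0∞) + 1)⁻¹ ≤ f i} := by
    intro i hi
    obtain ⟨n, hn⟩ := ENNReal.exists_inv_nat_lt hi
    refine Set.mem_iUnion.2 ⟨n, ?_⟩
    exact le_trans (ENNReal.inv_le_inv.2 (le_add_of_nonneg_right zero_le_one)) hn.le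
  refine Set.Countable.mono hsub (Set.countable_iUnion fun n => ?_)
  exact (ENNReal.finite_const_le_of_tsum_ne_top h (by simp)).countable

lemma QBF.keyB (Q : QBF X μ) {p : ℝ} (hp0 : 0 < p)
    (hpnorm : ∀ f g : X → ℝ≥0∞, Measurable f → Measurable g →
      Q.N (fun x => f x + g x) ^ p ≤ Q.N f ^ p + Q.N g ^ p)
    (A : ℕ → Set X) (hA : ∀ n, MeasurableSet (A n))
    (a : ℕ → ℝ≥0∞) (ha : ∀ n, a n ≠ ⊤)
    (hω : ∀ n, Q.N ((A n).indicator fun _ => 1) ≠ ⊤) :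
    Q.N (fun x => ∑' n, (A n).indicator (fun _ => a n) x) ^ p ≤
      ∑' n, (a n * Q.N ((A n).indicator fun _ => 1)) ^ p := by
  classical
  set gE : ℕ → X → ℝ≥0∞ := fun n x => (A n).indicator (fun _ => a n) x with hgE
  have hgEmeas : ∀ n, Measurable (gE n) := fun n => measurable_const.indicator (hA n)
  set h : ℕ → ℝ≥0∞ := fun n => (a n * Q.N ((A n).indicator fun _ => 1)) ^ p with hh
  by_cases hT : ∑' n, h n = ⊤
  · rw [hT]; exact le_top
  -- N of each gE
  have hNgE : ∀ n, Q.N (gE n) = a n * Q.N ((A n).indicator fun _ => 1) := by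
    intro n
    have h1 : gE n = fun x => a n * (A n).indicator (fun _ => 1) x := by
      funext x; by_cases hx : x ∈ A n <;> simp [hgE, hx]
    rw [h1, Q.smul_eq _ _ (measurable_const.indicator (hA n))]
  have hNgE_pow : ∀ n, Q.N (gE n) ^ p = h n := fun n => by rw [hNgE n]
  -- the approximating complex functions
  set b : ℕ → ℝ≥0 := fun n => (a n).toNNReal with hb
  have hba : ∀ n, (b n : ℝ≥0∞) = a n := fun n => ENNReal.coe_toNNReal (ha n)
  set S : ℕ → X → ℝ≥0 := fun n x => ∑ k ∈ Finset.range n, (A k).indicator (fun _ => b k) x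
    with hS
  have hSmeas : ∀ n, Measurable (S n) := fun n =>
    Finset.measurable_sum _ (fun k _ => measurable_const.indicator (hA k))
  set F : ℕ → X → ℂ := fun n x => ((S n x : ℝ) : ℂ) with hF
  have hFmeas : ∀ n, Measurable (F n) := fun n =>
    Complex.measurable_ofReal.comp ((hSmeas n).coe_nnreal_real)
  have hScoe : ∀ n x, ((S n x : ℝ≥0) : ℝ≥0∞) = ∑ k ∈ Finset.range n, gE k x := by
    intro n x
    rw [hS]
    push_cast
    refine Finset.sum_congr rfl fun k _ => ?_
    by_cases hx : x ∈ A k <;> simp [hgE, hx, hba]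
  have hFnorm : ∀ n x, (‖F n x‖₊ : ℝ≥0∞) = ∑ k ∈ Finset.range n, gE k x := by
    intro n x
    rw [hF]
    simp only [Complex.nnnorm_real, NNReal.nnnorm_eq]
    exact hScoe n x
  -- partial sums as ENNReal functions
  have hSfun : ∀ n, (fun x => (‖F n x‖₊ : ℝ≥0∞)) = fun x => ∑ k ∈ Finset.range n, gE k x := by
    intro n; funext x; exact hFnorm n x
  have hSmeasE : ∀ n, Measurable (fun x => ∑ k ∈ Finset.range n, gE k x) := fun n =>
    Finset.measurable_sum _ (fun k _ => hgEmeas k)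
  have hNS_pow : ∀ n, Q.N (fun x => ∑ k ∈ Finset.range n, gE k x) ^ p ≤ ∑' k, h k := by
    intro n
    refine le_trans (Q.N_finset_sum_rpow hp0 hpnorm _ _ hgEmeas) ?_
    calc ∑ k ∈ Finset.range n, Q.N (gE k) ^ p = ∑ k ∈ Finset.range n, h k := by
          exact Finset.sum_congr rfl fun k _ => hNgE_pow k
      _ ≤ ∑' k, h k := ENNReal.sum_le_tsum _
  have hpne : p ≠ 0 := hp0.ne'
  have hrpow_inv : ∀ y : ℝ≥0∞, (y ^ p) ^ (1/p) = y := by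
    intro y
    rw [← ENNReal.rpow_mul, mul_one_div, div_self hpne, ENNReal.rpow_one]
  have hpow_ne_top : ∀ {y : ℝ≥0∞}, y ^ p ≠ ⊤ → y ≠ ⊤ := by
    intro y hy hc
    rw [hc, ENNReal.top_rpow_of_pos hp0] at hy
    exact hy rfl
  have hFfin : ∀ n, Q.N (fun x => (‖F n x‖₊ : ℝ≥0∞)) ≠ ⊤ := by
    intro n
    rw [hSfun n]
    exact hpow_ne_top (ne_top_of_le_ne_top hT (hNS_pow n))
  -- Cauchy estimate
  have hdiffmeas : ∀ m n, Measurable (fun x => (‖F n x - F m x‖₊ : ℝ≥0∞)) := fun m n =>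
    (((hFmeas n).sub (hFmeas m)).nnnorm).coe_nnreal_ennreal
  have hsub : ∀ m n, m ≤ n → ∀ x,
      (‖F n x - F m x‖₊ : ℝ≥0∞) ≤ ∑ k ∈ Finset.Ico m n, gE k x := by
    intro m n hmn x
    have hle : S m x ≤ S n x :=
      Finset.sum_le_sum_of_subset (Finset.range_subset_range.2 hmn)
    have h1 : F n x - F m x = (((S n x - S m x : ℝ≥0) : ℝ) : ℂ) := by
      rw [hF]; rw [NNReal.coe_sub hle]; push_cast; ring
    have h2 : (‖F n x - F m x‖₊ : ℝ≥0∞) = ((S n x : ℝ≥0∞) - (S m x : ℝ≥0∞)) := by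
      rw [h1]
      simp only [Complex.nnnorm_real, NNReal.nnnorm_eq]
      exact ENNReal.coe_sub
    rw [h2, hScoe, hScoe]
    rw [tsub_le_iff_right]
    rw [add_comm]
    exact (Finset.sum_range_add_sum_Ico (fun k => gE k x) hmn).ge
  have hIco_le_tail : ∀ m n : ℕ, ∑ k ∈ Finset.Ico m n, Q.N (gE k) ^ p ≤ ∑' k, h (k + m) := by
    intro m n
    rw [Finset.sum_Ico_eq_sum_range]
    calc ∑ k ∈ Finset.range (n - m), Q.N (gE (m + k)) ^ p
        = ∑ k ∈ Finset.range (n - m), h (k + m) := by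
          exact Finset.sum_congr rfl fun k _ => by rw [hNgE_pow, add_comm]
      _ ≤ ∑' k, h (k + m) := ENNReal.sum_le_tsum _
  have hNdiff : ∀ m n : ℕ, m ≤ n →
      Q.N (fun x => (‖F n x - F m x‖₊ : ℝ≥0∞)) ^ p ≤ ∑' k, h (k + m) := by
    intro m n hmn
    have hmono : Q.N (fun x => (‖F n x - F m x‖₊ : ℝ≥0∞))
        ≤ Q.N (fun x => ∑ k ∈ Finset.Ico m n, gE k x) :=
      Q.mono _ _ (hdiffmeas m n) (Finset.measurable_sum _ (fun k _ => hgEmeas k))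
        (Filter.Eventually.of_forall (hsub m n hmn))
    refine le_trans (ENNReal.rpow_le_rpow hmono hp0.le) ?_
    refine le_trans (Q.N_finset_sum_rpow hp0 hpnorm _ _ hgEmeas) (hIco_le_tail m n)
  have hNdiff' : ∀ q : ℕ × ℕ,
      Q.N (fun x => (‖F q.1 x - F q.2 x‖₊ : ℝ≥0∞)) ^ p ≤ ∑' k, h (k + min q.1 q.2) := by
    rintro ⟨n, m⟩
    rcases le_total m n with hmn | hnm
    · simpa [min_eq_right hmn] using hNdiff m n hmn
    · have heq : (fun x => (‖F n x - F m x‖₊ : ℝ≥0∞))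
          = fun x => (‖F m x - F n x‖₊ : ℝ≥0∞) := by
        funext x; rw [← nnnorm_neg (F n x - F m x), neg_sub]
      simpa [min_eq_left hnm, heq] using hNdiff n m hnm
  set tail : ℕ → ℝ≥0∞ := fun m => ∑' k, h (k + m) with htaildef
  have htail : Tendsto tail atTop (𝓝 0) := ENNReal.tendsto_sum_nat_add h hT
  have hmin : Tendsto (fun q : ℕ × ℕ => min q.1 q.2) atTop atTop := by
    refine tendsto_atTop.2 fun b => eventually_atTop.2 ⟨(b, b), fun q hq => ?_⟩
    exact le_min hq.1 hq.2
  have hupper : Tendsto (fun q : ℕ × ℕ => (tail (min q.1 q.2)) ^ (1/p)) atTop (𝓝 0) := by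
    have h1 : Tendsto (fun q : ℕ × ℕ => tail (min q.1 q.2)) atTop (𝓝 0) := htail.comp hmin
    have h2 : Tendsto (fun y : ℝ≥0∞ => y ^ (1/p)) (𝓝 0) (𝓝 0) := by
      have := (ENNReal.continuous_rpow_const (y := 1/p)).tendsto 0
      rwa [ENNReal.zero_rpow_of_pos (by positivity)] at this
    exact h2.comp h1
  have hcauchy : Tendsto (fun q : ℕ × ℕ => Q.N (fun x => (‖F q.1 x - F q.2 x‖₊ : ℝ≥0∞)))
      atTop (𝓝 0) := by
    refine tendsto_of_tendsto_of_tendsto_of_le_of_le tendsto_const_nhds hupper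
      (fun q => zero_le) (fun q => ?_)
    have := ENNReal.rpow_le_rpow (hNdiff' q) (le_of_lt (by positivity : (0:ℝ) < 1/p))
    rwa [hrpow_inv] at this
  obtain ⟨G, hGmeas, hGfin, hGtend⟩ := Q.complete F hFmeas hFfin hcauchy
  -- a.e. domination of partial sums by ‖G‖
  set dG : X → ℝ≥0∞ := fun x => (‖G x‖₊ : ℝ≥0∞) with hdG
  have hdGmeas : Measurable dG := hGmeas.nnnorm.coe_nnreal_ennreal
  have hdom : ∀ n, ∀ᵐ x ∂μ, (∑ k ∈ Finset.range n, gE k x) ≤ dG x := by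
    intro n
    set hdn : X → ℝ≥0∞ := fun x => (∑ k ∈ Finset.range n, gE k x) - dG x with hhdn
    have hdnmeas : Measurable hdn := (hSmeasE n).sub hdGmeas
    have hle : ∀ m, n ≤ m → Q.N hdn ≤ Q.N (fun x => (‖F m x - G x‖₊ : ℝ≥0∞)) := by
      intro m hnm
      refine Q.mono _ _ hdnmeas (((hFmeas m).sub hGmeas).nnnorm.coe_nnreal_ennreal) ?_
      refine Filter.Eventually.of_forall fun x => ?_
      rw [hhdn]
      rw [tsub_le_iff_left]
      have h1 : (∑ k ∈ Finset.range n, gE k x) ≤ ∑ k ∈ Finset.range m, gE k x :=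
        Finset.sum_le_sum_of_subset (Finset.range_subset_range.2 hnm)
      have h2 : (∑ k ∈ Finset.range m, gE k x) = (‖F m x‖₊ : ℝ≥0∞) := (hFnorm m x).symm
      have h3 : (‖F m x‖₊ : ℝ≥0∞) ≤ (‖G x‖₊ : ℝ≥0∞) + (‖F m x - G x‖₊ : ℝ≥0∞) := by
        rw [← ENNReal.coe_add, ENNReal.coe_le_coe]
        calc ‖F m x‖₊ = ‖G x + (F m x - G x)‖₊ := by ring_nf
          _ ≤ ‖G x‖₊ + ‖F m x - G x‖₊ := nnnorm_add_le _ _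
      exact h1.trans (h2 ▸ h3)
    have hzero : Q.N hdn = 0 := by
      have htend : Tendsto (fun m => Q.N (fun x => (‖F m x - G x‖₊ : ℝ≥0∞))) atTop (𝓝 0) :=
        hGtend
      have := ge_of_tendsto htend (eventually_atTop.2 ⟨n, fun m hm => hle m hm⟩)
      exact le_antisymm this (zero_le)
    have hae := Q.eq_zero _ hdnmeas hzero
    filter_upwards [hae] with x hx
    have : (∑ k ∈ Finset.range n, gE k x) - dG x = 0 := hx
    exact tsub_eq_zero_iff_le.1 this
  -- combine: tsum ≤ dG a.e.
  have hdomall : ∀ᵐ x ∂μ, (fun x => ∑' k, gE k x) x ≤ dG x := by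
    have := (ae_all_iff.2 hdom)
    filter_upwards [this] with x hx
    rw [ENNReal.tsum_eq_iSup_nat]
    exact iSup_le hx
  have hfmeas : Measurable (fun x => ∑' k, gE k x) := Measurable.ennreal_tsum hgEmeas
  have hNf_le : Q.N (fun x => ∑' k, gE k x) ≤ Q.N dG :=
    Q.mono _ _ hfmeas hdGmeas hdomall
  -- bound N dG ^ p
  have hNdG : Q.N dG ^ p ≤ ∑' k, h k := by
    have hstep : ∀ n, Q.N dG ^ p ≤ (∑' k, h k)
        + Q.N (fun x => (‖F n x - G x‖₊ : ℝ≥0∞)) ^ p := by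
      intro n
      have hpt : ∀ x, dG x ≤ (‖F n x‖₊ : ℝ≥0∞) + (‖F n x - G x‖₊ : ℝ≥0∞) := by
        intro x
        rw [hdG, ← ENNReal.coe_add, ENNReal.coe_le_coe]
        calc ‖G x‖₊ = ‖F n x - (F n x - G x)‖₊ := by ring_nf
          _ ≤ ‖F n x‖₊ + ‖F n x - G x‖₊ := nnnorm_sub_le _ _
      have hm1 : Measurable (fun x => (‖F n x‖₊ : ℝ≥0∞)) :=
        (hFmeas n).nnnorm.coe_nnreal_ennreal
      have hm2 : Measurable (fun x => (‖F n x - G x‖₊ : ℝ≥0∞)) :=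
        ((hFmeas n).sub hGmeas).nnnorm.coe_nnreal_ennreal
      have hmono := Q.mono _ _ hdGmeas (hm1.add hm2) (Filter.Eventually.of_forall hpt)
      refine le_trans (ENNReal.rpow_le_rpow hmono hp0.le) ?_
      refine le_trans (hpnorm _ _ hm1 hm2) ?_
      refine add_le_add_left ?_ _
      rw [hSfun n]
      exact hNS_pow n
    have htendsum : Tendsto
        (fun n => (∑' k, h k) + Q.N (fun x => (‖F n x - G x‖₊ : ℝ≥0∞)) ^ p)
        atTop (𝓝 ((∑' k, h k) + 0)) := by
      refine Tendsto.const_add _ ?_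
      have hcont : Tendsto (fun y : ℝ≥0∞ => y ^ p) (𝓝 0) (𝓝 0) := by
        have := (ENNReal.continuous_rpow_const (y := p)).tendsto 0
        rwa [ENNReal.zero_rpow_of_pos hp0] at this
      exact hcont.comp hGtend
    have := ge_of_tendsto htendsum (Filter.Eventually.of_forall hstep)
    rwa [add_zero] at this
  exact le_trans (ENNReal.rpow_le_rpow hNf_le hp0.le) hNdG

lemma QBF.lemA (Q : QBF X μ) {p : ℝ} (hp0 : 0 < p)
    (hpnorm : ∀ f g : X → ℝ≥0∞, Measurable f → Measurable g →
      Q.N (fun x => f x + g x) ^ p ≤ Q.N f ^ p + Q.N g ^ p)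
    {I : Type*} (U : I → Set X) (hUm : ∀ i, MeasurableSet (U i))
    (hωtop : ∀ i, Q.N ((U i).indicator fun _ => 1) ≠ ⊤)
    (a : I → ℝ≥0∞) (ha : ∀ i, a i ≠ ⊤) (hc : {i | a i ≠ 0}.Countable) :
    Q.N (fun x => ∑' i, (U i).indicator (fun _ => a i) x) ^ p ≤
      ∑' i, (a i * Q.N ((U i).indicator fun _ => 1)) ^ p := by
  classical
  set s := {i | a i ≠ 0} with hs
  haveI := hc.to_subtype
  obtain ⟨e, he⟩ := exists_injective_nat s
  set A : ℕ → Set X := fun n => if h : ∃ i : s, e i = n then U h.choose else ∅ with hA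
  set av : ℕ → ℝ≥0∞ := fun n => if h : ∃ i : s, e i = n then a h.choose else 0 with hav
  have hAe : ∀ i : s, A (e i) = U (i : I) := by
    intro i
    have hex : ∃ j : s, e j = e i := ⟨i, rfl⟩
    have hch : hex.choose = i := he hex.choose_spec
    rw [hA]; simp only [dif_pos hex, hch]
  have have' : ∀ i : s, av (e i) = a (i : I) := by
    intro i
    have hex : ∃ j : s, e j = e i := ⟨i, rfl⟩
    have hch : hex.choose = i := he hex.choose_spec
    rw [hav]; simp only [dif_pos hex, hch]
  have hAm : ∀ n, MeasurableSet (A n) := by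
    intro n; rw [hA]
    by_cases h : ∃ i : s, e i = n
    · simp only [dif_pos h]; exact hUm _
    · simp only [dif_neg h]; exact MeasurableSet.empty
  have havt : ∀ n, av n ≠ ⊤ := by
    intro n; rw [hav]
    by_cases h : ∃ i : s, e i = n
    · simp only [dif_pos h]; exact ha _
    · simp only [dif_neg h]; exact ENNReal.zero_ne_top
  have hωA : ∀ n, Q.N ((A n).indicator fun _ => 1) ≠ ⊤ := by
    intro n; rw [hA]
    by_cases h : ∃ i : s, e i = n
    · simp only [dif_pos h]; exact hωtop _
    · simp only [dif_neg h]
      have : (∅ : Set X).indicator (fun _ => (1:ℝ≥0∞)) = fun _ => 0 := by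
        funext x; simp
      rw [this, Q.N_zero]
      exact ENNReal.zero_ne_top
  have hkey := Q.keyB hp0 hpnorm A hAm av havt hωA
  have hrange : ∀ n, (¬ ∃ i : s, e i = n) → n ∉ Set.range e := by
    intro n hn hr
    obtain ⟨i, hi⟩ := hr
    exact hn ⟨i, hi⟩
  -- identify the LHS functions
  have hLHS : (fun x => ∑' n, (A n).indicator (fun _ => av n) x)
      = fun x => ∑' i, (U i).indicator (fun _ => a i) x := by
    funext x
    have hsupp : Function.support (fun n => (A n).indicator (fun _ => av n) x)
        ⊆ Set.range e := by
      intro n hn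
      by_contra hr
      have hne : ¬ ∃ i : s, e i = n := fun ⟨i, hi⟩ => hr ⟨i, hi⟩
      apply hn
      rw [hA]; simp only [dif_neg hne, Set.indicator_empty']
      rfl
    have h1 : ∑' i : s, (A (e i)).indicator (fun _ => av (e i)) x
        = ∑' n, (A n).indicator (fun _ => av n) x := he.tsum_eq hsupp
    have h2 : ∀ i : s, (A (e i)).indicator (fun _ => av (e i)) x
        = (U (i:I)).indicator (fun _ => a (i:I)) x := by
      intro i; rw [hAe i, have' i]
    have h3 : ∑' i : s, (U (i:I)).indicator (fun _ => a (i:I)) x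
        = ∑' i, (U i).indicator (fun _ => a i) x := by
      refine tsum_subtype_eq_of_support_subset
        (f := fun i => (U i).indicator (fun _ => a i) x) (s := s) ?_
      intro i hi
      by_contra hmem
      apply hi
      have : a i = 0 := by simpa [hs] using hmem
      simp [this]
    rw [← h1]
    rw [← h3]
    exact tsum_congr h2
  -- identify the RHS sums
  have hRHS : ∑' n, (av n * Q.N ((A n).indicator fun _ => 1)) ^ p
      = ∑' i, (a i * Q.N ((U i).indicator fun _ => 1)) ^ p := by
    have hsupp : Function.support (fun n => (av n * Q.N ((A n).indicator fun _ => 1)) ^ p)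
        ⊆ Set.range e := by
      intro n hn
      by_contra hr
      have hne : ¬ ∃ i : s, e i = n := fun ⟨i, hi⟩ => hr ⟨i, hi⟩
      apply hn
      rw [hav]; simp only [dif_neg hne, zero_mul]
      exact ENNReal.zero_rpow_of_pos hp0
    have h1 : ∑' i : s, (av (e i) * Q.N ((A (e i)).indicator fun _ => 1)) ^ p
        = ∑' n, (av n * Q.N ((A n).indicator fun _ => 1)) ^ p := he.tsum_eq hsupp
    have h2 : ∀ i : s, (av (e i) * Q.N ((A (e i)).indicator fun _ => 1)) ^ p
        = (a (i:I) * Q.N ((U (i:I)).indicator fun _ => 1)) ^ p := by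
      intro i; rw [hAe i, have' i]
    have h3 : ∑' i : s, (a (i:I) * Q.N ((U (i:I)).indicator fun _ => 1)) ^ p
        = ∑' i, (a i * Q.N ((U i).indicator fun _ => 1)) ^ p := by
      refine tsum_subtype_eq_of_support_subset
        (f := fun i => (a i * Q.N ((U i).indicator fun _ => 1)) ^ p) (s := s) ?_
      intro i hi
      by_contra hmem
      apply hi
      have : a i = 0 := by simpa [hs] using hmem
      simp [this, ENNReal.zero_rpow_of_pos hp0]
    rw [← h1, ← h3]
    exact tsum_congr h2
  rw [← hLHS, ← hRHS]
  exact hkey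

/-- The `Y♭(U)` quasi-norm of a sequence `λ`: `‖Σᵢ |λᵢ| χ_{Uᵢ} | Y‖`. -/
def flatN (Q : QBF X μ) {I : Type*} (U : I → Set X) (lam : I → ℂ) : ℝ≥0∞ :=
  Q.N (fun x => ∑' i, (U i).indicator (fun _ => (‖lam i‖₊ : ℝ≥0∞)) x)

/-- The `Y♮(U)` quasi-norm of a sequence `λ`: `‖Σᵢ |λᵢ| μ(Uᵢ)⁻¹ χ_{Uᵢ} | Y‖`. -/
def natN (Q : QBF X μ) {I : Type*} (U : I → Set X) (lam : I → ℂ) : ℝ≥0∞ :=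
  Q.N (fun x => ∑' i, (U i).indicator (fun _ => (‖lam i‖₊ : ℝ≥0∞) / μ (U i)) x)

/-- If the quasi-norm of `Y` is a `p`-norm (`0 < p ≤ 1`), then with
`ω♭(i) = ‖χ_{Uᵢ}|Y‖` and `ω♮(i) = μ(Uᵢ)⁻¹ ‖χ_{Uᵢ}|Y‖` one has the continuous embeddings
`ℓ_p^{ω♭}(I) ↪ Y♭(U) ↪ ℓ_∞^{ω♭}(I)` and `ℓ_p^{ω♮}(I) ↪ Y♮(U) ↪ ℓ_∞^{ω♮}(I)`:
(a) `‖λ|Y♭‖^p ≤ c Σᵢ |λᵢ|^p ω♭(i)^p`; (b) `|λⱼ| ω♭(j) ≤ ‖λ|Y♭‖`; and analogously for `Y♮`. -/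
theorem sequence_space_embeddings
    [BorelSpace X] [T2Space X] [LocallyCompactSpace X] [SigmaCompactSpace X]
    [IsFiniteMeasureOnCompacts μ]
    (hsupp : ∀ V : Set X, IsOpen V → V.Nonempty → 0 < μ V)
    (Q : QBF X μ)
    (hrich : ∀ K : Set X, IsCompact K → Q.N (K.indicator fun _ => 1) ≠ ⊤)
    (p : ℝ) (hp0 : 0 < p) (hp1 : p ≤ 1)
    (hpnorm : ∀ f g : X → ℝ≥0∞, Measurable f → Measurable g →
      Q.N (fun x => f x + g x) ^ p ≤ Q.N f ^ p + Q.N g ^ p)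
    {I : Type*} (U : I → Set X) (σ : ℕ) (hU : AdmissibleCovering U σ) :
    ∃ c : ℝ≥0∞, 1 ≤ c ∧ c ≠ ⊤ ∧
      -- (a) for `Y♭`
      (∀ lam : I → ℂ,
        flatN Q U lam ^ p ≤
          c * ∑' i, (‖lam i‖₊ : ℝ≥0∞) ^ p * Q.N ((U i).indicator fun _ => 1) ^ p) ∧
      -- (b) for `Y♭`
      (∀ (lam : I → ℂ) (j : I),
        (‖lam j‖₊ : ℝ≥0∞) * Q.N ((U j).indicator fun _ => 1) ≤ flatN Q U lam) ∧
      -- (a) for `Y♮`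
      (∀ lam : I → ℂ,
        natN Q U lam ^ p ≤
          c * ∑' i, (‖lam i‖₊ : ℝ≥0∞) ^ p *
            (Q.N ((U i).indicator fun _ => 1) / μ (U i)) ^ p) ∧
      -- (b) for `Y♮`
      (∀ (lam : I → ℂ) (j : I),
        (‖lam j‖₊ : ℝ≥0∞) * (Q.N ((U j).indicator fun _ => 1) / μ (U j)) ≤
          natN Q U lam) := by
  classical
  have hUm := hU.meas
  have hωtop : ∀ i, Q.N ((U i).indicator fun _ => 1) ≠ ⊤ := by
    intro i
    refine ne_top_of_le_ne_top (hrich _ (hU.rel_compact i)) ?_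
    refine Q.mono _ _ (measurable_const.indicator (hUm i))
      (measurable_const.indicator isClosed_closure.measurableSet) ?_
    refine Filter.Eventually.of_forall fun x => ?_
    exact Set.indicator_le_indicator_of_subset subset_closure (fun _ => zero_le) x
  have hμUpos : ∀ i, 0 < μ (U i) := by
    intro i
    calc (0:ℝ≥0∞) < μ (interior (U i)) :=
          hsupp _ isOpen_interior (hU.interior_nonempty i)
      _ ≤ μ (U i) := measure_mono interior_subset
  have hμUfin : ∀ i, μ (U i) ≠ ⊤ := fun i =>
    ne_top_of_le_ne_top (hU.rel_compact i).measure_lt_top.ne (measure_mono subset_closure)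
  have hωpos : ∀ i, Q.N ((U i).indicator fun _ => 1) ≠ 0 := by
    intro i h0
    have hae := Q.eq_zero _ (measurable_const.indicator (hUm i)) h0
    have h1 : μ {x | (U i).indicator (fun _ => (1:ℝ≥0∞)) x ≠ 0} = 0 := by
      rw [Filter.EventuallyEq, ae_iff] at hae
      simpa using hae
    have h2 : U i ⊆ {x | (U i).indicator (fun _ => (1:ℝ≥0∞)) x ≠ 0} := by
      intro x hx
      simp only [Set.mem_setOf_eq, Set.indicator_of_mem hx]
      exact one_ne_zero
    exact absurd (measure_mono_null h2 h1) (hμUpos i).ne'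
  have hJc : {i : I | (U i).Nonempty}.Countable := by
    refine Set.Countable.mono ?_ (Set.countable_iUnion (fun n : ℕ =>
      (hU.locFin.finite_nonempty_inter_compact (isCompact_compactCovering X n)).countable))
    rintro i ⟨x, hx⟩
    obtain ⟨n, hn⟩ := exists_mem_compactCovering x
    exact Set.mem_iUnion.2 ⟨n, ⟨x, hx, hn⟩⟩
  haveI := hJc.to_subtype
  have hmeasgen : ∀ a : I → ℝ≥0∞,
      Measurable (fun x => ∑' i, (U i).indicator (fun _ => a i) x) := by
    intro a
    have hfun : (fun x => ∑' i, (U i).indicator (fun _ => a i) x)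
        = fun x => ∑' i : {i : I | (U i).Nonempty},
            (U (i:I)).indicator (fun _ => a (i:I)) x := by
      funext x
      refine (tsum_subtype_eq_of_support_subset
        (f := fun i => (U i).indicator (fun _ => a i) x)
        (s := {i : I | (U i).Nonempty}) ?_).symm
      intro i hi
      by_contra hne
      apply hi
      have hempty : U i = ∅ := Set.not_nonempty_iff_eq_empty.1 hne
      simp [hempty]
    rw [hfun]
    exact Measurable.ennreal_tsum fun i => measurable_const.indicator (hUm _)
  have hbgen : ∀ (a : I → ℝ≥0∞) (j : I),
      a j * Q.N ((U j).indicator fun _ => 1)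
        ≤ Q.N (fun x => ∑' i, (U i).indicator (fun _ => a i) x) := by
    intro a j
    have heq : Q.N ((U j).indicator fun _ => a j)
        = a j * Q.N ((U j).indicator fun _ => 1) := by
      have h1 : ((U j).indicator fun _ => a j)
          = fun x => a j * (U j).indicator (fun _ => 1) x := by
        funext x; by_cases h : x ∈ U j <;> simp [h]
      rw [h1, Q.smul_eq _ _ (measurable_const.indicator (hUm j))]
    rw [← heq]
    refine Q.mono _ _ (measurable_const.indicator (hUm j)) (hmeasgen a) ?_
    exact Filter.Eventually.of_forall fun x => ENNReal.le_tsum j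
  have hrearr : ∀ (c : ℝ≥0∞) (j : I),
      c / μ (U j) * Q.N ((U j).indicator fun _ => 1)
        = c * (Q.N ((U j).indicator fun _ => 1) / μ (U j)) := by
    intro c j
    rw [div_eq_mul_inv, div_eq_mul_inv]
    ring
  refine ⟨1, le_refl 1, ENNReal.one_ne_top, ?_, ?_, ?_, ?_⟩
  · -- (a) flat
    intro lam
    rw [one_mul]
    by_cases hT : ∑' i, (‖lam i‖₊ : ℝ≥0∞) ^ p * Q.N ((U i).indicator fun _ => 1) ^ p = ⊤
    · rw [hT]; exact le_top
    have hc : {i : I | (fun i => (‖lam i‖₊ : ℝ≥0∞)) i ≠ 0}.Countable := by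
      refine (countable_ne_zero_of_tsum_ne_top hT).mono ?_
      intro i hi
      simp only [Set.mem_setOf_eq] at hi ⊢
      refine mul_ne_zero ?_ ?_
      · intro h
        rcases ENNReal.rpow_eq_zero_iff.1 h with ⟨h0, _⟩ | ⟨htop, _⟩
        · exact hi h0
        · exact ENNReal.coe_ne_top htop
      · intro h
        rcases ENNReal.rpow_eq_zero_iff.1 h with ⟨h0, _⟩ | ⟨htop, _⟩
        · exact hωpos i h0
        · exact hωtop i htop
    have hmain := Q.lemA hp0 hpnorm U hUm hωtop (fun i => (‖lam i‖₊ : ℝ≥0∞))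
      (fun i => ENNReal.coe_ne_top) hc
    rw [flatN]
    refine le_trans hmain (le_of_eq (tsum_congr fun i => ?_))
    rw [ENNReal.mul_rpow_of_nonneg _ _ hp0.le]
  · -- (b) flat
    intro lam j
    rw [flatN]
    exact hbgen (fun i => (‖lam i‖₊ : ℝ≥0∞)) j
  · -- (a) nat
    intro lam
    rw [one_mul]
    by_cases hT : ∑' i, (‖lam i‖₊ : ℝ≥0∞) ^ p
        * (Q.N ((U i).indicator fun _ => 1) / μ (U i)) ^ p = ⊤
    · rw [hT]; exact le_top
    have hc : {i : I | (fun i => (‖lam i‖₊ : ℝ≥0∞) / μ (U i)) i ≠ 0}.Countable := by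
      refine (countable_ne_zero_of_tsum_ne_top hT).mono ?_
      intro i hi
      simp only [Set.mem_setOf_eq] at hi ⊢
      have hlam : (‖lam i‖₊ : ℝ≥0∞) ≠ 0 := by
        intro h; apply hi; rw [h, ENNReal.div_eq_zero_iff]; exact Or.inl rfl
      refine mul_ne_zero ?_ ?_
      · intro h
        rcases ENNReal.rpow_eq_zero_iff.1 h with ⟨h0, _⟩ | ⟨htop, _⟩
        · exact hlam h0
        · exact ENNReal.coe_ne_top htop
      · intro h
        rcases ENNReal.rpow_eq_zero_iff.1 h with ⟨h0, _⟩ | ⟨htop, _⟩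
        · rcases ENNReal.div_eq_zero_iff.1 h0 with h1 | h1
          · exact hωpos i h1
          · exact hμUfin i h1
        · exact absurd htop (ENNReal.div_lt_top (hωtop i) (hμUpos i).ne').ne
    have hmain := Q.lemA hp0 hpnorm U hUm hωtop (fun i => (‖lam i‖₊ : ℝ≥0∞) / μ (U i))
      (fun i => (ENNReal.div_lt_top ENNReal.coe_ne_top (hμUpos i).ne').ne) hc
    rw [natN]
    refine le_trans hmain (le_of_eq (tsum_congr fun i => ?_))
    rw [hrearr, ENNReal.mul_rpow_of_nonneg _ _ hp0.le]
  · -- (b) nat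
    intro lam j
    rw [natN, ← hrearr]
    exact hbgen (fun i => (‖lam i‖₊ : ℝ≥0∞) / μ (U i)) j
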